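/- (Estimate (6.8): improved second minimum via the uniform exponent ω̂_{n−1}.) Let ŵ be a real number with 1 < ŵ < ω̂_{n−1}(Θ). There exist constants C > 0 and H_0 > 0, depending only on n, Θ and ŵ, with the following property: for every real number ω > 0 and every primitive vector X ∈ ℤ^{n+1} with |X| ≥ H_0 and |y · X| = |X|^{−ω}, at which the symmetric convex body C' = {z ∈ ℝ^{n+1} : |z| ≤ |X| and |y · z| ≤ |X|^{−ω}} attains its first successive minimum (with respect to the lattice ℤ^{n+1}) equal to 1, the second successive minimum λ_2 of C' satisfies λ_2 ≤ C|X|^{−1 + ω/ŵ}. -/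

import Mathlib

open scoped BigOperators Pointwise

noncomputable section

set_option maxHeartbeats 1600000

/-- Coordinates of a degree-`r` multivector in `Λ^r(ℝ^{n+1})`, with respect to the
orthonormal basis formed by the wedge products `e_{i₁} ∧ ⋯ ∧ e_{i_r}` (`i₁ < ⋯ < i_r`)
of the standard basis vectors. -/
abbrev MultiVec (n r : ℕ) := {S : Finset (Fin (n + 1)) // S.card = r} → ℝ

/-- The Euclidean norm of a multivector. -/
def mvNorm {n r : ℕ} (X : MultiVec n r) : ℝ :=
  Real.sqrt (∑ S, X S ^ 2)

/-- The Euclidean norm of a vector of `ℝ^{n+1}`. -/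
def vNorm {n : ℕ} (x : Fin (n + 1) → ℝ) : ℝ :=
  Real.sqrt (∑ i, x i ^ 2)

/-- A multivector is integral if all its coordinates (in the basis of wedge products of
standard basis vectors) are integers; this encodes `X ∈ Λ^r(ℤ^{n+1})`. -/
def mvIntegral {n r : ℕ} (X : MultiVec n r) : Prop :=
  ∀ S, ∃ k : ℤ, X S = (k : ℝ)

/-- The wedge product `y ∧ X` of a vector `y ∈ ℝ^{n+1}` with a degree-`r` multivector `X`,
in coordinates. -/
def vWedge {n r : ℕ} (y : Fin (n + 1) → ℝ) (X : MultiVec n r) : MultiVec n (r + 1) :=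
  fun T => ∑ i ∈ T.1.attach,
    (-1 : ℝ) ^ (T.1.filter (· < i.1)).card * y i.1 *
      X ⟨T.1.erase i.1, by rw [Finset.card_erase_of_mem i.2, T.2]; omega⟩

/-- A vector of `ℝ^{n+1}` viewed as a degree-one multivector. -/
def vecToMulti {n : ℕ} (x : Fin (n + 1) → ℝ) : MultiVec n 1 :=
  fun S => ∑ i ∈ S.1, x i

/-- The wedge product `x 0 ∧ ⋯ ∧ x r` of `r` vectors of `ℝ^{n+1}`; its coordinate at an
`r`-element subset `S` is the corresponding `r × r` minor of the matrix whose columns are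
the `x j`. -/
def multiWedge {n r : ℕ} (x : Fin r → Fin (n + 1) → ℝ) : MultiVec n r :=
  fun S => Matrix.det (Matrix.of fun a b : Fin r => x b ((S.1.orderIsoOfFin S.2 a : Fin (n + 1))))

/-- The contraction (internal product) `y ⌟ Z` of a degree-`(r+1)` multivector `Z` by a
vector `y ∈ ℝ^{n+1}`: the unique degree-`r` multivector satisfying
`W · (y ⌟ Z) = (W ∧ y) · Z` for every degree-`r` multivector `W`, written in coordinates. -/
def vContract {n r : ℕ} (y : Fin (n + 1) → ℝ) (Z : MultiVec n (r + 1)) : MultiVec n r :=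
  fun S => ∑ i ∈ (S.1ᶜ).attach,
    (-1 : ℝ) ^ (S.1.filter (fun j => i.1 < j)).card * y i.1 *
      Z ⟨insert i.1 S.1, by
        rw [Finset.card_insert_of_notMem (Finset.mem_compl.mp i.2), S.2]⟩

/-- The point `y = (1, θ₁, …, θₙ) ∈ ℝ^{n+1}` of homogeneous coordinates of `Θ ∈ ℝⁿ`. -/
def yTheta {n : ℕ} (θ : Fin n → ℝ) : Fin (n + 1) → ℝ :=
  Fin.cons 1 θ

/-- The exponent `ω_d(Θ)`: the supremum (in `ℝ ∪ {±∞}`) of the real numbers `ω` for which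
there exist infinitely many nonzero integer multivectors `X ∈ Λ^{d+1}(ℤ^{n+1})` with
`|y ∧ X| ≤ |X|^{-ω}`. -/
def omegaExp (n : ℕ) (θ : Fin n → ℝ) (d : ℕ) : EReal :=
  sSup {w : EReal | ∃ ω : ℝ, w = (ω : EReal) ∧
    {X : MultiVec n (d + 1) | mvIntegral X ∧ X ≠ 0 ∧
      mvNorm (vWedge (yTheta θ) X) ≤ mvNorm X ^ (-ω)}.Infinite}

/-- `max_{0 ≤ i ≤ n} |x_i|` of an integer tuple, as a real number. -/
def maxAbs {n : ℕ} (x : Fin (n + 1) → ℤ) : ℝ :=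
  ((Finset.univ.sup (fun i => (x i).natAbs) : ℕ) : ℝ)

/-- `ω_0(Θ)` (Definition 1): the supremum (in `ℝ ∪ {±∞}`) of the real numbers `ω` for
which there exist infinitely many integer `(n+1)`-tuples `(x₀, …, xₙ)` with
`max_{1 ≤ i ≤ n} |x₀ θ_i - x_i| ≤ (max_{0 ≤ i ≤ n} |x_i|)^{-ω}`. -/
def omega0T (n : ℕ) (θ : Fin n → ℝ) : EReal :=
  sSup {w : EReal | ∃ ω : ℝ, w = (ω : EReal) ∧
    {x : Fin (n + 1) → ℤ |
      ∀ i : Fin n, |(x 0 : ℝ) * θ i - (x i.succ : ℝ)| ≤ maxAbs x ^ (-ω)}.Infinite}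

/-- `ω_{n-1}(Θ)` (Definition 1): the supremum (in `ℝ ∪ {±∞}`) of the real numbers `ω` for
which there exist infinitely many integer `(n+1)`-tuples `(x₀, …, xₙ)` with
`|x₀ + x₁θ₁ + ⋯ + xₙθₙ| ≤ (max_{0 ≤ i ≤ n} |x_i|)^{-ω}`. -/
def omegaLastT (n : ℕ) (θ : Fin n → ℝ) : EReal :=
  sSup {w : EReal | ∃ ω : ℝ, w = (ω : EReal) ∧
    {x : Fin (n + 1) → ℤ |
      |(x 0 : ℝ) + ∑ i : Fin n, (x i.succ : ℝ) * θ i| ≤ maxAbs x ^ (-ω)}.Infinite}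

/-- `ω̂_0(Θ)` (Definition 2). -/
def omegaHat0 (n : ℕ) (θ : Fin n → ℝ) : EReal :=
  sSup {w : EReal | ∃ ω : ℝ, w = (ω : EReal) ∧
    ∀ᶠ X : ℝ in Filter.atTop, ∃ x : Fin (n + 1) → ℤ, x ≠ 0 ∧
      (∀ j, |(x j : ℝ)| ≤ X) ∧
      ∀ i : Fin n, |(x 0 : ℝ) * θ i - (x i.succ : ℝ)| ≤ X ^ (-ω)}

/-- `ω̂_{n-1}(Θ)` (Definition 2). -/
def omegaHatLast (n : ℕ) (θ : Fin n → ℝ) : EReal :=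
  sSup {w : EReal | ∃ ω : ℝ, w = (ω : EReal) ∧
    ∀ᶠ X : ℝ in Filter.atTop, ∃ x : Fin (n + 1) → ℤ, x ≠ 0 ∧
      (∀ j, |(x j : ℝ)| ≤ X) ∧
      |(x 0 : ℝ) + ∑ i : Fin n, (x i.succ : ℝ) * θ i| ≤ X ^ (-ω)}

/-- The `r`-th compound of a subset `C` of `ℝ^{n+1}`: the convex hull in `Λ^r(ℝ^{n+1})`
of the wedge products `z₁ ∧ ⋯ ∧ z_r` of `r` elements of `C`. -/
def compoundBody {n : ℕ} (r : ℕ) (C : Set (Fin (n + 1) → ℝ)) : Set (MultiVec n r) :=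
  convexHull ℝ {Z | ∃ z : Fin r → Fin (n + 1) → ℝ, (∀ j, z j ∈ C) ∧ Z = multiWedge z}

/-- The `k`-th successive minimum of a subset `C` of `ℝ^{n+1}` with respect to the lattice
`ℤ^{n+1}`: the infimum of the `λ > 0` such that `λ • C` contains `k` linearly independent
integer points. -/
def succMin (n : ℕ) (C : Set (Fin (n + 1) → ℝ)) (k : ℕ) : ℝ :=
  sInf {lam : ℝ | 0 < lam ∧ ∃ v : Fin k → Fin (n + 1) → ℤ,
    LinearIndependent ℝ (fun j => fun i => ((v j i : ℝ))) ∧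
    ∀ j, (fun i => ((v j i : ℝ))) ∈ lam • C}

lemma vNorm_smul' {n : ℕ} (c : ℝ) (x : Fin (n + 1) → ℝ) :
    vNorm (c • x) = |c| * vNorm x := by
  unfold vNorm
  rw [← Real.sqrt_sq_eq_abs, ← Real.sqrt_mul (sq_nonneg c)]
  congr 1
  rw [Finset.mul_sum]
  exact Finset.sum_congr rfl fun i _ => by simp [smul_eq_mul]; ring

lemma vNorm_le_of_bound' {n : ℕ} (x : Fin (n + 1) → ℝ) (T : ℝ) (hT : 0 ≤ T)
    (h : ∀ i, |x i| ≤ T) : vNorm x ≤ Real.sqrt (n + 1) * T := by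
  rw [← Real.sqrt_sq hT, ← Real.sqrt_mul (by positivity)]
  apply Real.sqrt_le_sqrt
  calc ∑ i, x i ^ 2 ≤ ∑ _i : Fin (n + 1), T ^ 2 :=
        Finset.sum_le_sum fun i _ => by
          have h1 := h i
          nlinarith [abs_nonneg (x i), sq_abs (x i)]
    _ = (↑n + 1) * T ^ 2 := by
        simp [Finset.sum_const]

lemma dotY_eq' {n : ℕ} (θ : Fin n → ℝ) (z : Fin (n + 1) → ℝ) :
    ∑ i, yTheta θ i * z i = z 0 + ∑ i : Fin n, z i.succ * θ i := by
  rw [Fin.sum_univ_succ]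
  simp only [yTheta, Fin.cons_zero, Fin.cons_succ, one_mul]
  congr 1
  exact Finset.sum_congr rfl fun i _ => mul_comm _ _

lemma dotY_smul' {n : ℕ} (θ : Fin n → ℝ) (c : ℝ) (z : Fin (n + 1) → ℝ) :
    ∑ i, yTheta θ i * (c • z) i = c * ∑ i, yTheta θ i * z i := by
  rw [Finset.mul_sum]
  exact Finset.sum_congr rfl fun i _ => by simp [smul_eq_mul]; ring

lemma mem_smul_body' {n : ℕ} (θ : Fin n → ℝ) (H hw lam : ℝ) (hlam : 0 < lam)
    (z : Fin (n + 1) → ℝ) (h1 : vNorm z ≤ lam * H)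
    (h2 : |∑ i, yTheta θ i * z i| ≤ lam * hw) :
    z ∈ lam • {w : Fin (n + 1) → ℝ | vNorm w ≤ H ∧ |∑ i, yTheta θ i * w i| ≤ hw} := by
  rw [Set.mem_smul_set_iff_inv_smul_mem₀ (ne_of_gt hlam)]
  refine ⟨?_, ?_⟩
  · rw [vNorm_smul', abs_inv, abs_of_pos hlam, inv_mul_le_iff₀ hlam]
    exact h1
  · rw [dotY_smul', abs_mul, abs_inv, abs_of_pos hlam, inv_mul_le_iff₀ hlam]
    exact h2

lemma succMin_le' {n : ℕ} (Cset : Set (Fin (n + 1) → ℝ)) (k : ℕ) (lam : ℝ) (hlam : 0 < lam)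
    (v : Fin k → Fin (n + 1) → ℤ)
    (hli : LinearIndependent ℝ (fun j => fun i => ((v j i : ℝ))))
    (hmem : ∀ j, (fun i => ((v j i : ℝ))) ∈ lam • Cset) : succMin n Cset k ≤ lam :=
  csInf_le ⟨0, fun _l hl => le_of_lt hl.1⟩ ⟨hlam, v, hli, hmem⟩

/-- **Estimate (6.8).** Let `1 < w_hat < ω̂_{n-1}(Θ)`. There are constants `C > 0` and
`H₀ > 0`, depending only on `n`, `Θ` and `w_hat`, such that: for every real `ω > 0` and
every primitive `X ∈ ℤ^{n+1}` with `|X| ≥ H₀` and `|y · X| = |X|^{-ω}`, at which the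
symmetric convex body `C' = {z ∈ ℝ^{n+1} : |z| ≤ |X|, |y · z| ≤ |X|^{-ω}}` attains its
first successive minimum (w.r.t. `ℤ^{n+1}`) equal to `1`, the second successive minimum
`λ₂` of `C'` satisfies `λ₂ ≤ C |X|^{-1 + ω/w_hat}`. -/
theorem estimate_6_8 (n : ℕ) (hn : 0 < n) (θ : Fin n → ℝ)
    (hθ : LinearIndependent ℚ (Fin.cons (1 : ℝ) θ))
    (w_hat : ℝ) (hw_hat1 : 1 < w_hat) (hw_hat : (w_hat : EReal) < omegaHatLast n θ) :
    ∃ C H₀ : ℝ, 0 < C ∧ 0 < H₀ ∧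
      ∀ (ω : ℝ) (X : Fin (n + 1) → ℤ) (C' : Set (Fin (n + 1) → ℝ)),
        0 < ω →
        Finset.univ.gcd X = 1 →
        H₀ ≤ vNorm (fun i => ((X i : ℝ))) →
        |∑ i, yTheta θ i * (X i : ℝ)| = vNorm (fun i => ((X i : ℝ))) ^ (-ω) →
        C' = {z : Fin (n + 1) → ℝ |
          vNorm z ≤ vNorm (fun i => ((X i : ℝ))) ∧
          |∑ i, yTheta θ i * z i| ≤ vNorm (fun i => ((X i : ℝ))) ^ (-ω)} →
        (fun i => ((X i : ℝ))) ∈ C' →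
        succMin n C' 1 = 1 →
        succMin n C' 2 ≤ C * vNorm (fun i => ((X i : ℝ))) ^ (-1 + ω / w_hat) := by
  classical
  obtain ⟨b, hbS, hblt⟩ := lt_sSup_iff.mp hw_hat
  obtain ⟨ω', rfl, hev⟩ := hbS
  rw [EReal.coe_lt_coe_iff] at hblt
  obtain ⟨T₁, hT₁⟩ := Filter.eventually_atTop.mp hev
  set s : ℝ := Real.sqrt (n + 1) with hs
  have hs1 : 1 ≤ s := by
    have h1 := Real.sq_sqrt (show (0:ℝ) ≤ (n:ℝ) + 1 by positivity)
    have h2 := Real.sqrt_nonneg ((n:ℝ) + 1)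
    have h3 : (0:ℝ) ≤ (n:ℝ) := Nat.cast_nonneg n
    rw [hs]
    nlinarith
  set T₀ : ℝ := max T₁ 1 with hT₀def
  have hT₀1 : 1 ≤ T₀ := le_max_right _ _
  have key : ∀ T : ℝ, T₀ ≤ T → ∃ z : Fin (n + 1) → ℤ, z ≠ 0 ∧ (∀ j, |(z j : ℝ)| ≤ T) ∧
      |∑ i, yTheta θ i * (z i : ℝ)| ≤ T ^ (-ω') := by
    intro T hT
    obtain ⟨z, hz0, hzb, hzq⟩ := hT₁ T (le_trans (le_max_left _ _) hT)
    exact ⟨z, hz0, hzb, by rw [dotY_eq']; exact hzq⟩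
  refine ⟨2 * s, max (2 * s * T₀) 2, by positivity, by positivity, ?_⟩
  intro ω X C' hω hgcd hH₀ hyX hC' hXC' h1
  set H : ℝ := vNorm (fun i => ((X i : ℝ))) with hH
  have hH2 : 2 ≤ H := le_trans (le_max_right _ _) hH₀
  have hHT : 2 * s * T₀ ≤ H := le_trans (le_max_left _ _) hH₀
  have hH1 : 1 < H := by linarith
  have hH0 : 0 < H := by linarith
  have hw0 : 0 < w_hat := by linarith
  have hω'0 : 0 < ω' := by linarith
  have hT₀pos : 0 < T₀ := by linarith
  have hyXne : (0:ℝ) < H ^ (-ω) := Real.rpow_pos_of_pos hH0 _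
  have claim : ∀ T : ℝ, T₀ ≤ T → 1 ≤ max (s * T / H) (T ^ (-ω') * H ^ ω) := by
    intro T hT
    have hTpos : 0 < T := lt_of_lt_of_le hT₀pos hT
    obtain ⟨z, hz0, hzb, hzq⟩ := key T hT
    set lam := max (s * T / H) (T ^ (-ω') * H ^ ω) with hlamdef
    have hlam : 0 < lam := lt_max_of_lt_left (by positivity)
    have hzmem : (fun i => ((z i : ℝ))) ∈ lam • C' := by
      rw [hC']
      apply mem_smul_body' θ H (H ^ (-ω)) lam hlam
      · calc vNorm (fun i => ((z i : ℝ))) ≤ s * T := vNorm_le_of_bound' _ T hTpos.le hzb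
          _ = (s * T / H) * H := by field_simp
          _ ≤ lam * H := mul_le_mul_of_nonneg_right (le_max_left _ _) hH0.le
      · calc |∑ i, yTheta θ i * ((z i : ℝ))| ≤ T ^ (-ω') := hzq
          _ = (T ^ (-ω') * H ^ ω) * H ^ (-ω) := by
              rw [mul_assoc, ← Real.rpow_add hH0]
              simp
          _ ≤ lam * H ^ (-ω) := mul_le_mul_of_nonneg_right (le_max_right _ _) hyXne.le
    have hzr0 : (fun i => ((z i : ℝ))) ≠ (0 : Fin (n+1) → ℝ) := by
      intro hzz
      apply hz0
      funext i
      have := congrFun hzz i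
      simpa using this
    have hle : succMin n C' 1 ≤ lam := by
      apply succMin_le' _ _ _ hlam (fun _ => z)
      · exact linearIndependent_unique_iff.mpr hzr0
      · intro _
        exact hzmem
    rw [h1] at hle
    exact hle
  have hA2 : T₀ ^ ω' ≤ H ^ ω := by
    have h := claim T₀ le_rfl
    have hfirst : s * T₀ / H < 1 := by
      rw [div_lt_one hH0]
      nlinarith
    have h2 : 1 ≤ T₀ ^ (-ω') * H ^ ω := by
      rcases le_max_iff.mp h with h' | h'
      · linarith
      · exact h'
    have hmulid : T₀ ^ (-ω') * T₀ ^ ω' = 1 := by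
      rw [← Real.rpow_add hT₀pos]
      simp
    nlinarith [Real.rpow_pos_of_pos hT₀pos ω', Real.rpow_pos_of_pos hT₀pos (-ω'),
      Real.rpow_pos_of_pos hH0 ω]
  have hT' : T₀ ≤ H ^ (ω / w_hat) := by
    have e1 : (T₀ ^ ω') ^ (ω'⁻¹) ≤ (H ^ ω) ^ (ω'⁻¹) :=
      Real.rpow_le_rpow (by positivity) hA2 (by positivity)
    rw [← Real.rpow_mul hT₀pos.le, ← Real.rpow_mul hH0.le,
      mul_inv_cancel₀ (ne_of_gt hω'0), Real.rpow_one] at e1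
    calc T₀ ≤ H ^ (ω * ω'⁻¹) := e1
      _ ≤ H ^ (ω / w_hat) := by
          apply Real.rpow_le_rpow_of_exponent_le hH1.le
          rw [← div_eq_mul_inv]
          gcongr
  have star : 1 ≤ s * H ^ (ω / w_hat - 1) := by
    have h := claim (H ^ (ω / w_hat)) hT'
    have hsecond : (H ^ (ω / w_hat)) ^ (-ω') * H ^ ω < 1 := by
      rw [← Real.rpow_mul hH0.le, ← Real.rpow_add hH0]
      apply Real.rpow_lt_one_of_one_lt_of_neg hH1
      have hid : ω / w_hat * -ω' + ω = ω * (w_hat - ω') / w_hat := by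
        field_simp
        ring
      rw [hid]
      apply div_neg_of_neg_of_pos _ hw0
      nlinarith
    have h2 : 1 ≤ s * H ^ (ω / w_hat) / H := by
      rcases le_max_iff.mp h with h' | h'
      · exact h'
      · linarith
    rw [Real.rpow_sub hH0, Real.rpow_one]
    calc (1:ℝ) ≤ s * H ^ (ω / w_hat) / H := h2
      _ = s * (H ^ (ω / w_hat) / H) := by ring
  set T : ℝ := max T₀ (2 * H ^ (ω / ω')) with hTdef
  obtain ⟨z, hz0, hzb, hzq⟩ := key T (le_max_left _ _)
  have hTpos : 0 < T := lt_of_lt_of_le hT₀pos (le_max_left _ _)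
  have hT2 : 2 * H ^ (ω / ω') ≤ T := le_max_right _ _
  have hzq2 : |∑ i, yTheta θ i * ((z i : ℝ))| < H ^ (-ω) := by
    have e1 : T ^ (-ω') ≤ (2 * H ^ (ω / ω')) ^ (-ω') :=
      Real.rpow_le_rpow_of_nonpos (by positivity) hT2 (by linarith)
    have e2 : (2 * H ^ (ω / ω')) ^ (-ω') = 2 ^ (-ω') * H ^ (-ω) := by
      rw [Real.mul_rpow (by norm_num) (Real.rpow_pos_of_pos hH0 _).le,
          ← Real.rpow_mul hH0.le]
      have hee : ω / ω' * -ω' = -ω := by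
        field_simp
      rw [hee]
    have e3 : (2:ℝ) ^ (-ω') < 1 :=
      Real.rpow_lt_one_of_one_lt_of_neg one_lt_two (by linarith)
    calc |∑ i, yTheta θ i * ((z i : ℝ))| ≤ T ^ (-ω') := hzq
      _ ≤ 2 ^ (-ω') * H ^ (-ω) := by rw [← e2]; exact e1
      _ < 1 * H ^ (-ω) := mul_lt_mul_of_pos_right e3 hyXne
      _ = H ^ (-ω) := one_mul _
  obtain ⟨i₀, hi₀⟩ : ∃ i₀, X i₀ ≠ 0 := by
    by_contra h
    push_neg at h
    have hg0 : Finset.univ.gcd X = 0 := Finset.gcd_eq_zero_iff.mpr (fun i _ => h i)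
    rw [hgcd] at hg0
    exact one_ne_zero hg0
  have hi₀r : ((X i₀ : ℝ)) ≠ 0 := Int.cast_ne_zero.mpr hi₀
  have hli : LinearIndependent ℝ
      ![(fun i => ((X i : ℝ))), (fun i => ((z i : ℝ)))] := by
    rw [LinearIndependent.pair_iff]
    intro a b hab
    have hab' : ∀ i, a * (X i : ℝ) + b * (z i : ℝ) = 0 := by
      intro i
      have := congrFun hab i
      simpa [smul_eq_mul] using this
    by_cases hb : b = 0
    · refine ⟨?_, hb⟩
      have h := hab' i₀
      rw [hb, zero_mul, add_zero] at h
      rcases mul_eq_zero.mp h with h' | h'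
      · exact h'
      · exact absurd h' hi₀r
    · exfalso
      set c : ℝ := -a / b with hc
      have hzc : ∀ i, (z i : ℝ) = c * (X i : ℝ) := by
        intro i
        have h := hab' i
        rw [hc]
        field_simp
        linarith
      have hdot : ∑ i, yTheta θ i * ((z i : ℝ)) = c * ∑ i, yTheta θ i * ((X i : ℝ)) := by
        rw [Finset.mul_sum]
        exact Finset.sum_congr rfl fun i _ => by rw [hzc i]; ring
      have hcy : |c| * H ^ (-ω) < H ^ (-ω) := by
        calc |c| * H ^ (-ω) = |c| * |∑ i, yTheta θ i * ((X i : ℝ))| := by rw [hyX]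
          _ = |∑ i, yTheta θ i * ((z i : ℝ))| := by rw [hdot, abs_mul]
          _ < H ^ (-ω) := hzq2
      have hc1 : |c| < 1 := by nlinarith [abs_nonneg c]
      have hc0 : c ≠ 0 := by
        intro h0
        apply hz0
        funext i
        have h := hzc i
        rw [h0, zero_mul] at h
        exact_mod_cast h
      have hcross : ∀ i, z i * X i₀ = z i₀ * X i := by
        intro i
        have e1 : ((z i : ℝ)) * (X i₀ : ℝ) = (z i₀ : ℝ) * (X i : ℝ) := by
          rw [hzc i, hzc i₀]
          ring
        exact_mod_cast e1
      have hdvd : X i₀ ∣ z i₀ := by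
        have hg : X i₀ ∣ Finset.univ.gcd (fun i => z i₀ * X i) := by
          apply Finset.dvd_gcd
          intro i _
          exact ⟨z i, by rw [← hcross i]; ring⟩
        rw [Finset.gcd_mul_left, hgcd, mul_one, ← Int.abs_eq_normalize] at hg
        exact (dvd_abs _ _).mp hg
      have hzi₀ : z i₀ ≠ 0 := by
        intro h0
        apply hc0
        have h := hzc i₀
        rw [h0] at h
        push_cast at h
        rcases mul_eq_zero.mp h.symm with h' | h'
        · exact h'
        · exact absurd h' hi₀r
      have habs : |X i₀| ≤ |z i₀| :=
        Int.le_of_dvd (abs_pos.mpr hzi₀) ((abs_dvd _ _).mpr ((dvd_abs _ _).mpr hdvd))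
      have habsr : |(X i₀ : ℝ)| ≤ |(z i₀ : ℝ)| := by exact_mod_cast habs
      have hz_eq : |(z i₀ : ℝ)| = |c| * |(X i₀ : ℝ)| := by
        rw [hzc i₀, abs_mul]
      have hXpos : 0 < |(X i₀ : ℝ)| := abs_pos.mpr hi₀r
      nlinarith
  set lam : ℝ := max 1 (s * T / H) with hlamdef
  have hlampos : 0 < lam := lt_max_of_lt_left one_pos
  have hmemX : (fun i => ((X i : ℝ))) ∈ lam • C' := by
    rw [hC']
    apply mem_smul_body' θ H (H ^ (-ω)) lam hlampos
    · rw [← hH]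
      nlinarith [le_max_left 1 (s * T / H)]
    · rw [hyX]
      nlinarith [le_max_left 1 (s * T / H)]
  have hmemz : (fun i => ((z i : ℝ))) ∈ lam • C' := by
    rw [hC']
    apply mem_smul_body' θ H (H ^ (-ω)) lam hlampos
    · calc vNorm (fun i => ((z i : ℝ))) ≤ s * T := vNorm_le_of_bound' _ T hTpos.le hzb
        _ = (s * T / H) * H := by field_simp
        _ ≤ lam * H := mul_le_mul_of_nonneg_right (le_max_right _ _) hH0.le
    · calc |∑ i, yTheta θ i * ((z i : ℝ))| ≤ H ^ (-ω) := hzq2.le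
        _ = 1 * H ^ (-ω) := (one_mul _).symm
        _ ≤ lam * H ^ (-ω) := mul_le_mul_of_nonneg_right (le_max_left _ _) hyXne.le
  have hle2 : succMin n C' 2 ≤ lam := by
    apply succMin_le' _ _ _ hlampos ![X, z]
    · have hfam : (fun j => fun i => ((![X, z] j i : ℝ))) =
          ![(fun i => ((X i : ℝ))), (fun i => ((z i : ℝ)))] := by
        funext j
        fin_cases j <;> rfl
      rw [hfam]
      exact hli
    · intro j
      fin_cases j
      · exact hmemX
      · exact hmemz
  refine le_trans hle2 ?_
  have hexp : (-1 + ω / w_hat) = ω / w_hat - 1 := by ring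
  rw [hexp]
  have hpow : 0 < H ^ (ω / w_hat - 1) := Real.rpow_pos_of_pos hH0 _
  apply max_le
  · nlinarith
  · rw [div_le_iff₀ hH0]
    have hHH : H ^ (ω / w_hat - 1) * H = H ^ (ω / w_hat) := by
      nth_rewrite 2 [← Real.rpow_one H]
      rw [← Real.rpow_add hH0]
      congr 1
      ring
    have hTle : T ≤ 2 * H ^ (ω / w_hat) := by
      apply max_le
      · nlinarith [Real.rpow_pos_of_pos hH0 (ω / w_hat)]
      · have hmono : H ^ (ω / ω') ≤ H ^ (ω / w_hat) := by
          apply Real.rpow_le_rpow_of_exponent_le hH1.le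
          gcongr
        linarith
    calc s * T ≤ s * (2 * H ^ (ω / w_hat)) := by nlinarith
      _ = 2 * s * (H ^ (ω / w_hat - 1) * H) := by rw [hHH]; ring
      _ = 2 * s * H ^ (ω / w_hat - 1) * H := by ring
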